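/- Let $H \subseteq G$ be a subgraph of a directed acyclic graph $G$. Then $Q_H$ is a face of $\tilde Q_G$ if and only if $H$ is path consistent and admissible with respect to $G$. -/

import Mathlib

/-- The vector `e_i - e_j` associated to the directed edge `e = (i, j)`. -/
def vecOf (n : ℕ) (e : Fin n × Fin n) : Fin n → ℝ :=
  fun k => (if k = e.1 then 1 else 0) - (if k = e.2 then 1 else 0)

/-- The root polytope `tilde Q_G = conv{0, e_i - e_j : (i,j) ∈ E(G)}`. -/
def tQ (n : ℕ) (E : Set (Fin n × Fin n)) : Set (Fin n → ℝ) :=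
  convexHull ℝ ({0} ∪ vecOf n '' E)

/-- The root polytope `Q_H = conv{e_i - e_j : (i,j) ∈ E(H)}`. -/
def Qp (n : ℕ) (E : Set (Fin n × Fin n)) : Set (Fin n → ℝ) :=
  convexHull ℝ (vecOf n '' E)

/-- `F` is a face of `P`: cut out by a supporting hyperplane. -/
def IsFace (n : ℕ) (P F : Set (Fin n → ℝ)) : Prop :=
  ∃ (c : Fin n → ℝ) (a : ℝ), (∀ x ∈ P, a ≤ ∑ i, c i * x i) ∧
    F = {x ∈ P | ∑ i, c i * x i = a}

/-- Undirected adjacency underlying the subgraph `H`. -/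
def UAdj {n : ℕ} (E : Set (Fin n × Fin n)) (u v : Fin n) : Prop :=
  (u, v) ∈ E ∨ (v, u) ∈ E

/-- `u` and `v` lie in the same connected component of the underlying undirected graph. -/
def SameComp {n : ℕ} (E : Set (Fin n × Fin n)) : Fin n → Fin n → Prop :=
  Relation.ReflTransGen (UAdj E)

/-- `WalkVal E i j k` : there is an undirected walk in `E` from `i` to `j` whose number of
forward edges minus number of backward edges equals `k`. -/
inductive WalkVal {n : ℕ} (E : Set (Fin n × Fin n)) : Fin n → Fin n → ℤ → Prop
  | nil (v : Fin n) : WalkVal E v v 0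
  | fwd {u v w : Fin n} {k : ℤ} : WalkVal E u v k → (v, w) ∈ E → WalkVal E u w (k + 1)
  | bwd {u v w : Fin n} {k : ℤ} : WalkVal E u v k → (w, v) ∈ E → WalkVal E u w (k - 1)

/-- `H` is path consistent. -/
def PathConsistent {n : ℕ} (EH : Set (Fin n × Fin n)) : Prop :=
  ∀ (i j : Fin n) (k₁ k₂ : ℤ), WalkVal EH i j k₁ → WalkVal EH i j k₂ → k₁ = k₂

/-- `H ⊆ G` is admissible with respect to a weight function `w` (increasing by 1 along edges
of `H`): every directed cycle `c` in the component multigraph `H_comp` (a cyclic sequence of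
edges of `E(G) \ E(H)`, the target of each lying in the same component of `H^un` as the
source of the next) satisfies `∑ wd(e) > -|c|`, where `wd(e) = w(source) - w(target)`. -/
def Admissible {n : ℕ} (E EH : Set (Fin n × Fin n)) (w : Fin n → ℤ) : Prop :=
  ∀ (k : ℕ) (c : Fin (k + 1) → Fin n × Fin n),
    (∀ i, c i ∈ E ∧ c i ∉ EH) →
    (∀ i : Fin (k + 1), SameComp EH (c i).2 (c (i + 1)).1) →
    -((k : ℤ) + 1) < ∑ i, (w (c i).1 - w (c i).2)

lemma dot_vecOf {n : ℕ} (c : Fin n → ℝ) (e : Fin n × Fin n) :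
    ∑ i, c i * vecOf n e i = c e.1 - c e.2 := by
  simp [vecOf, mul_sub, Finset.sum_sub_distrib, mul_ite]

lemma isLinearMap_dot {n : ℕ} (c : Fin n → ℝ) :
    IsLinearMap ℝ (fun x : Fin n → ℝ => ∑ i, c i * x i) := by
  constructor
  · intro x y; simp [Pi.add_apply, mul_add, Finset.sum_add_distrib]
  · intro r x
    simp only [Pi.smul_apply, smul_eq_mul, Finset.mul_sum]
    apply Finset.sum_congr rfl; intros; ring

lemma vecOf_not_mem_Qp {n : ℕ} {EH : Set (Fin n × Fin n)} {e : Fin n × Fin n}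
    (he : e.1 ≠ e.2) (hne : e ∉ EH) :
    vecOf n e ∉ Qp n EH := by
  set c : Fin n → ℝ := vecOf n e with hc
  have hsub : Qp n EH ⊆ {x | ∑ i, c i * x i ≤ 1} := by
    apply convexHull_min _ (convex_halfSpace_le (isLinearMap_dot c) 1)
    rintro _ ⟨f, hf, rfl⟩
    have hfe : f ≠ e := fun h => hne (h ▸ hf)
    rw [Set.mem_setOf_eq, dot_vecOf]
    simp only [hc, vecOf]
    by_cases h1 : f.1 = e.1
    · have h4 : f.2 ≠ e.2 := fun h => hfe (Prod.ext h1 h)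
      simp only [h1, h4, if_pos rfl, if_neg he, if_neg h4]
      split_ifs <;> first | exact absurd rfl (by assumption) | exact (‹False›).elim | norm_num
    · rw [if_neg h1]
      split_ifs <;> norm_num
  intro hmem
  have := hsub hmem
  rw [Set.mem_setOf_eq, dot_vecOf] at this
  simp only [hc, vecOf, if_pos rfl, if_neg he, if_neg (Ne.symm he)] at this
  norm_num at this

lemma zero_not_mem_Qp {n : ℕ} {EH : Set (Fin n × Fin n)} (hEH : ∀ f ∈ EH, f.1 < f.2) :
    (0 : Fin n → ℝ) ∉ Qp n EH := by
  set c : Fin n → ℝ := fun k => (k : ℝ) with hc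
  have hsub : Qp n EH ⊆ {x | ∑ i, c i * x i < 0} := by
    apply convexHull_min _ (convex_halfSpace_lt (isLinearMap_dot c) 0)
    rintro _ ⟨f, hf, rfl⟩
    rw [Set.mem_setOf_eq, dot_vecOf]
    have : (f.1 : ℝ) < (f.2 : ℝ) := by exact_mod_cast hEH f hf
    simpa [hc] using this
  intro hmem
  have := hsub hmem
  simp at this

lemma walkVal_sameComp {n : ℕ} {EH : Set (Fin n × Fin n)} {i j : Fin n} {k : ℤ}
    (h : WalkVal EH i j k) : SameComp EH i j := by
  induction h with
  | nil => exact Relation.ReflTransGen.refl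
  | fwd _ he ih => exact ih.tail (Or.inl he)
  | bwd _ he ih => exact ih.tail (Or.inr he)

lemma sameComp_walkVal {n : ℕ} {EH : Set (Fin n × Fin n)} {i j : Fin n}
    (h : SameComp EH i j) : ∃ k, WalkVal EH i j k := by
  induction h with
  | refl => exact ⟨0, WalkVal.nil i⟩
  | tail _ he ih =>
    obtain ⟨k, hk⟩ := ih
    rcases he with he | he
    · exact ⟨k + 1, hk.fwd he⟩
    · exact ⟨k - 1, hk.bwd he⟩

lemma sameComp_symm {n : ℕ} {EH : Set (Fin n × Fin n)} {i j : Fin n}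
    (h : SameComp EH i j) : SameComp EH j i := by
  induction h with
  | refl => exact Relation.ReflTransGen.refl
  | tail _ he ih =>
    refine Relation.ReflTransGen.trans (Relation.ReflTransGen.single ?_) ih
    rcases he with he | he
    · exact Or.inr he
    · exact Or.inl he

lemma walkVal_eval {n : ℕ} {EH : Set (Fin n × Fin n)} {c : Fin n → ℝ}
    (hc : ∀ e ∈ EH, c e.2 = c e.1 + 1) {i j : Fin n} {k : ℤ}
    (h : WalkVal EH i j k) : c j = c i + k := by
  induction h with
  | nil => simp
  | fwd _ he ih => have := hc _ he; simp only [] at this; push_cast; push_cast at ih; linarith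
  | bwd _ he ih => have := hc _ he; simp only [] at this; push_cast; push_cast at ih; linarith

lemma walkVal_eval_int {n : ℕ} {EH : Set (Fin n × Fin n)} {w : Fin n → ℤ}
    (hw : ∀ e ∈ EH, w e.2 = w e.1 + 1) {i j : Fin n} {k : ℤ}
    (h : WalkVal EH i j k) : w j = w i + k := by
  induction h with
  | nil => simp
  | fwd _ he ih => have := hw _ he; simp only [] at this; omega
  | bwd _ he ih => have := hw _ he; simp only [] at this; omega

def pw {V : Type*} (len : V → V → ℝ) : List V → ℝ
  | [] => 0
  | [_] => 0
  | a :: b :: t => len a b + pw len (b :: t)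

lemma pw_append_cons {V : Type*} (len : V → V → ℝ) (X : List V) (a : V) (Z : List V) :
    pw len (X ++ a :: Z) = pw len (X ++ [a]) + pw len (a :: Z) := by
  induction X with
  | nil => simp [pw]
  | cons x X ih =>
    cases X with
    | nil => cases Z with
      | nil => simp [pw]
      | cons z Z => simp only [List.cons_append, List.nil_append, pw]; ring
    | cons x' X' =>
      simp only [List.cons_append, List.append_eq, pw] at ih ⊢
      rw [ih]; ring

lemma pw_snoc {V : Type*} (len : V → V → ℝ) (X : List V) (hX : X ≠ []) (v : V) :
    pw len (X ++ [v]) = pw len X + len (X.getLast hX) v := by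
  induction X with
  | nil => exact absurd rfl hX
  | cons x X ih =>
    cases X with
    | nil => simp [pw]
    | cons x' X' =>
      simp only [List.cons_append, List.append_eq, pw] at ih ⊢
      rw [ih (by simp)]
      simp [List.getLast, pw]
      ring

lemma exists_potential {V : Type*} [Fintype V] [DecidableEq V]
    (Adj : V → V → Prop) (len : V → V → ℝ)
    (hcyc : ∀ (u : V) (B : List V), (u :: B).Nodup →
      List.Chain' Adj ((u :: B) ++ [u]) → 0 ≤ pw len ((u :: B) ++ [u])) :
    ∃ d : V → ℝ, ∀ u v, Adj u v → d v ≤ d u + len u v := by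
  classical
  set Pv : V → Set (List V) :=
    fun v => {l | l.Nodup ∧ List.Chain' Adj l ∧ l.getLast? = some v} with hPv
  have hfin : ∀ v, (Pv v).Finite := by
    intro v
    apply Set.Finite.subset (List.finite_length_le V (Fintype.card V))
    intro l hl
    exact hl.1.length_le_card
  have hne : ∀ v, (Pv v).Nonempty := fun v => ⟨[v], by simp [hPv, List.Chain']⟩
  have H : ∀ v, ∃ P ∈ Pv v, ∀ Q ∈ Pv v, pw len P ≤ pw len Q :=
    fun v => Set.exists_min_image (Pv v) (pw len) (hfin v) (hne v)
  choose P hP hmin using H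
  refine ⟨fun v => pw len (P v), fun u v huv => ?_⟩
  obtain ⟨hnd, hch, hlast⟩ := hP u
  have hPu_ne : P u ≠ [] := by intro h; rw [h] at hlast; simp at hlast
  have hgetLast : (P u).getLast hPu_ne = u := by
    have h2 := List.getLast?_eq_getLast hPu_ne
    rw [h2] at hlast; exact Option.some_injective _ hlast
  by_cases hv : v ∈ P u
  · obtain ⟨A, B, hAB⟩ := List.append_of_mem hv
    have hlastB : (v :: B).getLast (by simp) = u := by
      have h1 : (P u).getLast? = (v :: B).getLast? := by
        rw [hAB]; exact List.getLast?_append_of_ne_nil A (by simp)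
      rw [List.getLast?_eq_getLast hPu_ne, List.getLast?_eq_getLast (l := v :: B) (by simp)] at h1
      rw [← Option.some_injective _ h1, hgetLast]
    have hpre : (A ++ [v]) <+: P u := ⟨B, by rw [hAB]; simp⟩
    have hsuf : (v :: B) <:+ P u := ⟨A, hAB.symm⟩
    have hcand : (A ++ [v]) ∈ Pv v := by
      refine ⟨hnd.sublist hpre.sublist, hch.prefix hpre, by simp⟩
    have hdv : pw len (P v) ≤ pw len (A ++ [v]) := hmin v _ hcand
    -- cycle
    have hndB : (v :: B).Nodup := hnd.sublist hsuf.sublist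
    have hchC : List.Chain' Adj ((v :: B) ++ [v]) := by
      rw [List.Chain', List.isChain_append]
      refine ⟨hch.suffix hsuf, List.isChain_singleton v, ?_⟩
      intro x hx y hy
      rw [List.getLast?_eq_getLast (l := v :: B) (by simp), hlastB] at hx
      simp at hx hy
      rw [← hx, ← hy]; exact huv
    have hcyc0 : 0 ≤ pw len ((v :: B) ++ [v]) := hcyc v B hndB hchC
    have hsplit : pw len (P u) = pw len (A ++ [v]) + pw len (v :: B) := by
      rw [hAB]; exact pw_append_cons len A v B
    have hC : pw len ((v :: B) ++ [v]) = pw len (v :: B) + len u v := by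
      rw [pw_snoc len (v :: B) (by simp) v, hlastB]
    -- conclude
    have : pw len (A ++ [v]) ≤ pw len (P u) + len u v := by
      rw [hsplit]; rw [hC] at hcyc0; linarith
    calc pw len (P v) ≤ pw len (A ++ [v]) := hdv
      _ ≤ pw len (P u) + len u v := this
  · have hcand : (P u ++ [v]) ∈ Pv v := by
      refine ⟨?_, ?_, by simp⟩
      · rw [List.nodup_append]
        exact ⟨hnd, List.nodup_singleton v, by simp; exact fun a ha hav => hv (hav ▸ ha)⟩
      · rw [List.Chain', List.isChain_append]
        refine ⟨hch, List.isChain_singleton v, ?_⟩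
        intro x hx y hy
        rw [List.getLast?_eq_getLast hPu_ne, hgetLast] at hx
        simp at hx hy
        rw [← hx, ← hy]; exact huv
    have := hmin v _ hcand
    rw [pw_snoc len (P u) hPu_ne v, hgetLast] at this
    exact this


section BF

variable {n : ℕ} (E EH : Set (Fin n × Fin n)) (w : Fin n → ℤ)

def Adjc (u v : Fin n) : Prop := (u, v) ∈ E ∨ (v, u) ∈ EH

open scoped Classical in
noncomputable def lenc (ε : ℝ) : Fin n → Fin n → ℝ := fun u v =>
  if (u, v) ∈ EH then 1 else if (v, u) ∈ EH then -1 else 1 - ε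

inductive GWalk : Fin n → Fin n → List (Fin n × Fin n) → Prop
  | base {a b : Fin n} : SameComp EH a b → GWalk a b []
  | cons {a s t b : Fin n} {L : List (Fin n × Fin n)} : SameComp EH a s → (s, t) ∈ E →
      (s, t) ∉ EH → GWalk t b L → GWalk a b ((s, t) :: L)

variable {E EH}

lemma GWalk.left_extend {a b c : Fin n} {L : List (Fin n × Fin n)}
    (h : GWalk E EH b c L) (hab : SameComp EH a b) : GWalk E EH a c L := by
  cases h with
  | base h' => exact GWalk.base (hab.trans h')
  | cons h1 h2 h3 h4 => exact GWalk.cons (hab.trans h1) h2 h3 h4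

lemma GWalk.mem_edges {a b : Fin n} {L : List (Fin n × Fin n)}
    (h : GWalk E EH a b L) : ∀ p ∈ L, p ∈ E ∧ p ∉ EH := by
  induction h with
  | base _ => intro p hp; simp at hp
  | cons h1 h2 h3 _ ih =>
    intro p hp
    rcases List.mem_cons.mp hp with rfl | hp
    · exact ⟨h2, h3⟩
    · exact ih p hp

lemma GWalk.links {a b : Fin n} {L : List (Fin n × Fin n)}
    (h : GWalk E EH a b L) (hne : L ≠ []) :
    SameComp EH a (L.head hne).1 ∧ SameComp EH (L.getLast hne).2 b ∧
      L.Chain' (fun p q => SameComp EH p.2 q.1) := by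
  induction h with
  | base _ => exact absurd rfl hne
  | @cons a s t b L h1 h2 h3 h4 ih =>
    cases L with
    | nil =>
      refine ⟨h1, ?_, by simp [List.Chain']⟩
      cases h4 with
      | base h' => simpa using h'
    | cons e L' =>
      obtain ⟨ih1, ih2, ih3⟩ := ih (by simp)
      refine ⟨h1, ?_, ?_⟩
      · rw [List.getLast_cons (by simp : e :: L' ≠ [])]
        exact ih2
      · exact List.IsChain.cons ih3 (by intro y hy; simp at hy; subst hy; simpa using ih1)

def wds (L : List (Fin n × Fin n)) : ℤ := (L.map (fun p => w p.1 - w p.2)).sum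

lemma list_sum_fin {α : Type*} (f : α → ℤ) (L : List α) :
    (L.map f).sum = ∑ i : Fin L.length, f (L.get i) := by
  induction L with
  | nil => simp
  | cons a L ih =>
    rw [List.map_cons, List.sum_cons, ih]
    exact (Fin.sum_univ_succ (fun i : Fin (L.length + 1) => f ((a :: L).get i))).symm

lemma decomp (hE : ∀ e ∈ E, e.1 < e.2)
    (hw : ∀ e ∈ EH, w e.2 = w e.1 + 1) (ε : ℝ) (hH : EH ⊆ E) :
    ∀ (l : List (Fin n)) (hl : l ≠ []), List.Chain' (Adjc E EH) l →
      ∃ L : List (Fin n × Fin n), GWalk E EH (l.head hl) (l.getLast hl) L ∧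
        pw (lenc EH ε) l =
          ((w (l.getLast hl) - w (l.head hl) + wds w L : ℤ) : ℝ) + L.length * (1 - ε) ∧
        L.length + 1 ≤ l.length := by
  intro l
  induction l with
  | nil => intro hl; exact absurd rfl hl
  | cons a l ih =>
    intro hl hch
    cases l with
    | nil =>
      exact ⟨[], GWalk.base Relation.ReflTransGen.refl, by simp [pw, wds], by simp⟩
    | cons b t =>
      have hab : Adjc E EH a b := (List.isChain_cons_cons.mp hch).1
      have hch' : List.Chain' (Adjc E EH) (b :: t) := (List.isChain_cons_cons.mp hch).2
      obtain ⟨L, hG, hpw, hlen⟩ := ih (by simp) hch'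
      have hhead : ((b :: t).head (by simp)) = b := rfl
      have hgl : (a :: b :: t).getLast hl = (b :: t).getLast (by simp) :=
        List.getLast_cons (by simp)
      have hpwcons : pw (lenc EH ε) (a :: b :: t) =
          lenc EH ε a b + pw (lenc EH ε) (b :: t) := rfl
      rw [hhead] at hG hpw
      by_cases h1 : (a, b) ∈ EH
      · refine ⟨L, ?_, ?_, by simpa using Nat.le_succ_of_le hlen⟩
        · rw [show (a :: b :: t).head hl = a from rfl, hgl]
          exact hG.left_extend (Relation.ReflTransGen.single (Or.inl h1))
        · have hw1 : w b = w a + 1 := hw (a, b) h1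
          have hlen1 : lenc EH ε a b = 1 := by simp [lenc, if_pos h1]
          rw [hpwcons, hlen1, hpw, hgl]
          push_cast
          rw [show (a :: b :: t).head hl = a from rfl]
          push_cast [hw1]
          ring
      · by_cases h2 : (b, a) ∈ EH
        · refine ⟨L, ?_, ?_, by simpa using Nat.le_succ_of_le hlen⟩
          · rw [show (a :: b :: t).head hl = a from rfl, hgl]
            exact hG.left_extend (Relation.ReflTransGen.single (Or.inr h2))
          · have hw1 : w a = w b + 1 := hw (b, a) h2
            have hlen1 : lenc EH ε a b = -1 := by simp [lenc, if_neg h1, if_pos h2]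
            rw [hpwcons, hlen1, hpw, hgl]
            push_cast
            rw [show (a :: b :: t).head hl = a from rfl]
            push_cast [hw1]
            ring
        · have habE : (a, b) ∈ E := by
            rcases hab with h | h
            · exact h
            · exact absurd h h2
          refine ⟨(a, b) :: L, ?_, ?_, by simpa using hlen⟩
          · rw [show (a :: b :: t).head hl = a from rfl, hgl]
            exact GWalk.cons Relation.ReflTransGen.refl habE h1 hG
          · have hlen1 : lenc EH ε a b = 1 - ε := by simp [lenc, if_neg h1, if_neg h2]
            have hwds : wds w ((a, b) :: L) = (w a - w b) + wds w L := by simp [wds]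
            rw [hpwcons, hlen1, hpw, hgl, hwds]
            push_cast [List.length_cons]
            rw [show (a :: b :: t).head hl = a from rfl]
            push_cast
            ring

lemma cycle_nonneg (hE : ∀ e ∈ E, e.1 < e.2) (hH : EH ⊆ E)
    (hw : ∀ e ∈ EH, w e.2 = w e.1 + 1) (hadm : Admissible E EH w)
    (u : Fin n) (B : List (Fin n)) (hnd : (u :: B).Nodup)
    (hch : List.Chain' (Adjc E EH) ((u :: B) ++ [u])) :
    0 ≤ pw (lenc EH (1 / (n + 1))) ((u :: B) ++ [u]) := by
  set ε : ℝ := 1 / (n + 1) with hε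
  have hεpos : 0 < ε := by positivity
  have hl : (u :: B) ++ [u] ≠ [] := by simp
  obtain ⟨L, hG, hpw, hlen⟩ := decomp (E := E) (EH := EH) (w := w) hE hw ε hH _ hl hch
  have hhead : ((u :: B) ++ [u]).head hl = u := rfl
  have hglast : ((u :: B) ++ [u]).getLast hl = u := by
    exact List.getLast_concat
  rw [hhead, hglast] at hG hpw
  have hkn : L.length ≤ n := by
    have h1 : ((u :: B) ++ [u]).length = B.length + 2 := by simp
    have h2 : B.length + 1 ≤ n := by
      have := hnd.length_le_card
      simpa using this
    omega
  cases hLc : L with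
  | nil =>
    rw [hLc] at hpw
    simp only [wds, List.map_nil, List.sum_nil, List.length_nil] at hpw
    rw [hpw]
    push_cast
    norm_num
  | cons e0 L' =>
    -- k = L.length = L'.length + 1 ≥ 1
    have hLne : L ≠ [] := by rw [hLc]; simp
    have hcast : L'.length + 1 = L.length := by rw [hLc]; simp
    obtain ⟨hlink1, hlink2, hlink3⟩ := hG.links hLne
    set cs : Fin (L'.length + 1) → Fin n × Fin n := fun i => L.get (Fin.cast hcast i) with hcs
    have hmem : ∀ i, cs i ∈ E ∧ cs i ∉ EH := fun i =>
      hG.mem_edges _ (List.get_mem L (Fin.cast hcast i))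
    have hcyclic : ∀ i : Fin (L'.length + 1), SameComp EH (cs i).2 (cs (i + 1)).1 := by
      intro i
      by_cases hi : (i : ℕ) < L'.length
      · have hv1 : ((i + 1 : Fin (L'.length + 1)) : ℕ) = (i : ℕ) + 1 := by
          rw [Fin.val_add_one_of_lt]
          exact Fin.lt_iff_val_lt_val.mpr (by simpa using hi)
        have hstep := List.isChain_iff_getElem.mp hlink3 (i : ℕ) (by omega)
        have e1 : cs i = L.get ⟨(i : ℕ), by omega⟩ :=
          congrArg L.get (Fin.ext (by simp))
        have e2 : cs (i + 1) = L.get ⟨(i : ℕ) + 1, by omega⟩ :=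
          congrArg L.get (Fin.ext (by simp [hv1]))
        rw [e1, e2]; exact hstep
      · have hival : (i : ℕ) = L'.length := by omega
        have hilast : i = Fin.last L'.length := by
          apply Fin.ext; simpa using hival
        have hi1 : i + 1 = 0 := by rw [hilast]; exact Fin.last_add_one _
        have hget_last : cs i = L.getLast hLne := by
          rw [List.getLast_eq_getElem]
          simp [hcs, hival, ← hcast]
        have hget_zero : cs (i + 1) = L.head hLne := by
          rw [hi1]
          simp only [hcs]
          rw [← List.get_mk_zero (by omega : 0 < L.length)]
          congr 1
        rw [hget_last, hget_zero]
        exact hlink2.trans hlink1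
    have hsum := hadm L'.length cs hmem hcyclic
    have hsum2 : ∑ i, (w (cs i).1 - w (cs i).2) = wds w L := by
      rw [wds, list_sum_fin]
      exact Fintype.sum_equiv (finCongr hcast) _ _ (fun i => rfl)
    rw [hsum2] at hsum
    -- hsum : -(L'.length + 1) < wds w L, so wds w L ≥ -L'.length ≥ 1 - L.length
    have hwds_ge : (1 : ℤ) - (L.length : ℤ) ≤ wds w L := by omega
    have hk : (L.length : ℝ) ≤ n := by exact_mod_cast hkn
    have hwds_ge' : (1 : ℝ) - (L.length : ℝ) ≤ (wds w L : ℝ) := by exact_mod_cast hwds_ge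
    rw [hpw]
    push_cast
    have hεk : (L.length : ℝ) * ε ≤ n * ε := by
      apply mul_le_mul_of_nonneg_right hk hεpos.le
    have hnε : (n : ℝ) * ε < 1 := by
      rw [hε, mul_one_div]
      have hpos : (0:ℝ) < (n:ℝ) + 1 := by positivity
      rw [div_lt_one hpos]
      linarith
    linarith
  
lemma face_of_admissible {n : ℕ} {E EH : Set (Fin n × Fin n)}
    (hE : ∀ e ∈ E, e.1 < e.2) (hH : EH ⊆ E) {w : Fin n → ℤ}
    (hw : ∀ e ∈ EH, w e.2 = w e.1 + 1) (hadm : Admissible E EH w) :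
    IsFace n (tQ n E) (Qp n EH) := by
  classical
  set ε : ℝ := 1 / (n + 1) with hε
  have hεpos : 0 < ε := by positivity
  obtain ⟨d, hd⟩ := exists_potential (Adjc E EH) (lenc EH ε)
    (fun u B hnd hch => cycle_nonneg w hE hH hw hadm u B hnd hch)
  have hA : ∀ e ∈ EH, d e.2 = d e.1 + 1 := by
    intro e he
    have h1 : d e.2 ≤ d e.1 + lenc EH ε e.1 e.2 := hd e.1 e.2 (Or.inl (hH he))
    have h2 : d e.1 ≤ d e.2 + lenc EH ε e.2 e.1 := hd e.2 e.1 (Or.inr (by simpa using he))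
    have hne : (e.2, e.1) ∉ EH := by
      intro hc
      have := hE _ (hH hc)
      have := hE _ (hH he)
      simp at *
      omega
    have hl1 : lenc EH ε e.1 e.2 = 1 := by simp [lenc, if_pos (show (e.1, e.2) ∈ EH by simpa using he)]
    have hl2 : lenc EH ε e.2 e.1 = -1 := by
      simp only [lenc, if_neg hne]
      rw [if_pos (show (e.1, e.2) ∈ EH by simpa using he)]
    rw [hl1] at h1; rw [hl2] at h2
    linarith
  have hB : ∀ e ∈ E, e ∉ EH → d e.2 < d e.1 + 1 := by
    intro e he hne
    have hne2 : (e.2, e.1) ∉ EH := by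
      intro hc
      have := hE _ (hH hc)
      have := hE _ he
      simp at *
      omega
    have h1 : d e.2 ≤ d e.1 + lenc EH ε e.1 e.2 := hd e.1 e.2 (Or.inl (by simpa using he))
    have hl1 : lenc EH ε e.1 e.2 = 1 - ε := by
      simp only [lenc, if_neg (show (e.1, e.2) ∉ EH by simpa using hne), if_neg hne2]
    rw [hl1] at h1
    linarith
  refine ⟨d, -1, ?_, ?_⟩
  · -- lower bound on tQ
    intro x hx
    have hsub : tQ n E ⊆ {x | -1 ≤ ∑ i, d i * x i} := by
      apply convexHull_min _ (convex_halfSpace_ge (isLinearMap_dot d) (-1))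
      rintro y (hy | ⟨e, he, rfl⟩)
      · simp only [Set.mem_singleton_iff] at hy
        subst hy
        simp
      · rw [Set.mem_setOf_eq, dot_vecOf]
        by_cases heh : e ∈ EH
        · have := hA e heh; linarith
        · have := hB e he heh; linarith
    exact hsub hx
  · apply Set.eq_of_subset_of_subset
    · intro x hx
      constructor
      · exact convexHull_mono (fun y hy => Or.inr (Set.image_mono hH hy)) hx
      · have hsub : Qp n EH ⊆ {x | ∑ i, d i * x i = -1} := by
          apply convexHull_min _ (convex_hyperplane (isLinearMap_dot d) (-1))
          rintro y ⟨e, he, rfl⟩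
          rw [Set.mem_setOf_eq, dot_vecOf]
          have := hA e he; linarith
        exact hsub hx
    · rintro x ⟨hxtQ, hxeq⟩
      rw [tQ, convexHull_eq] at hxtQ
      obtain ⟨ι, t, wt, z, hw0, hw1, hz, hx⟩ := hxtQ
      set g : (Fin n → ℝ) →ₗ[ℝ] ℝ := IsLinearMap.mk' _ (isLinearMap_dot d) with hg
      have hxsum : x = ∑ i ∈ t, wt i • z i := by
        rw [← hx, Finset.centerMass_eq_of_sum_1 _ _ hw1]
      have hgz : ∀ i ∈ t, -1 ≤ g (z i) := by
        intro i hi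
        rcases hz i hi with hz0 | ⟨e, he, hze⟩
        · simp only [Set.mem_singleton_iff] at hz0
          rw [hz0]
          simp
        · rw [← hze]
          have : g (vecOf n e) = d e.1 - d e.2 := dot_vecOf d e
          rw [this]
          by_cases heh : e ∈ EH
          · have := hA e heh; linarith
          · have := hB e he heh; linarith
      have hgx : g x = -1 := hxeq
      have hsum0 : ∑ i ∈ t, wt i * (g (z i) + 1) = 0 := by
        have h1 : g x = ∑ i ∈ t, wt i * g (z i) := by
          rw [hxsum, map_sum]
          simp [g, smul_eq_mul]
        have h2 : ∑ i ∈ t, wt i * (g (z i) + 1) = (∑ i ∈ t, wt i * g (z i)) + ∑ i ∈ t, wt i := by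
          rw [← Finset.sum_add_distrib]
          apply Finset.sum_congr rfl
          intros; ring
        rw [h2, ← h1, hgx, hw1]
        ring
      have hzero : ∀ i ∈ t, wt i * (g (z i) + 1) = 0 := by
        refine (Finset.sum_eq_zero_iff_of_nonneg ?_).mp hsum0
        intro i hi
        have := hgz i hi
        have := hw0 i hi
        nlinarith
      have hzmem : ∀ i ∈ t, wt i ≠ 0 → z i ∈ vecOf n '' EH := by
        intro i hi hwne
        have h0 : g (z i) = -1 := by
          have := hzero i hi
          rcases mul_eq_zero.mp this with h | h
          · exact absurd h hwne
          · linarith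
        rcases hz i hi with hz0 | ⟨e, he, hze⟩
        · exfalso
          simp only [Set.mem_singleton_iff] at hz0
          rw [hz0] at h0
          simp [g] at h0
        · rw [← hze] at h0
          have hdv : g (vecOf n e) = d e.1 - d e.2 := dot_vecOf d e
          rw [hdv] at h0
          by_cases heh : e ∈ EH
          · exact ⟨e, heh, hze⟩
          · exfalso
            have := hB e he heh
            linarith
      -- restrict to nonzero weights
      set S := t.filter (fun i => wt i ≠ 0) with hS
      have hxS : x = ∑ i ∈ S, wt i • z i := by
        rw [hxsum, hS]
        rw [Finset.sum_filter_of_ne]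
        intro i hi hne
        intro hwz
        rw [hwz, zero_smul] at hne
        exact hne rfl
      have hw1S : ∑ i ∈ S, wt i = 1 := by
        rw [hS, ← hw1]
        apply Finset.sum_filter_of_ne
        intro i hi hne hwz
        rw [hwz] at hne
        exact hne rfl
      have hcm : S.centerMass wt z = x := by
        rw [Finset.centerMass_eq_of_sum_1 _ _ hw1S, hxS]
      rw [Qp, ← hcm]
      apply Finset.centerMass_mem_convexHull
      · intro i hi; exact hw0 i (Finset.mem_filter.mp hi).1
      · rw [hw1S]; norm_num
      · intro i hi
        obtain ⟨hit, hwne⟩ := Finset.mem_filter.mp hi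
        exact hzmem i hit hwne

lemma admissible_of_face {n : ℕ} {E EH : Set (Fin n × Fin n)}
    (hE : ∀ e ∈ E, e.1 < e.2) (hH : EH ⊆ E)
    (hface : IsFace n (tQ n E) (Qp n EH)) :
    PathConsistent EH ∧
      ∃ w : Fin n → ℤ, (∀ e ∈ EH, w e.2 = w e.1 + 1) ∧ Admissible E EH w := by
  classical
  obtain ⟨c0, a, hfa, hfc⟩ := hface
  have h0tQ : (0 : Fin n → ℝ) ∈ tQ n E :=
    subset_convexHull _ _ (Or.inl rfl)
  have ha0 : a ≤ 0 := by
    have := hfa 0 h0tQ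
    simpa using this
  have hQp0 : (0 : Fin n → ℝ) ∉ Qp n EH := zero_not_mem_Qp (fun f hf => hE f (hH hf))
  have ha : a < 0 := by
    rcases lt_or_eq_of_le ha0 with h | h
    · exact h
    · exfalso
      apply hQp0
      rw [hfc]
      exact ⟨h0tQ, by simp [h]⟩
  -- normalized functional
  set c : Fin n → ℝ := fun v => c0 v / (-a) with hc
  have hna : (0 : ℝ) < -a := by linarith
  have hc_eq : ∀ e ∈ EH, c e.2 = c e.1 + 1 := by
    intro e he
    have hmem : vecOf n e ∈ Qp n EH := subset_convexHull _ _ ⟨e, he, rfl⟩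
    rw [hfc] at hmem
    obtain ⟨_, heq⟩ := hmem
    rw [dot_vecOf] at heq
    simp only [hc]
    rw [div_add' _ _ _ (ne_of_gt hna), div_eq_div_iff (ne_of_gt hna) (ne_of_gt hna)]
    ring_nf
    nlinarith [heq]
  have hc_lt : ∀ e ∈ E, e ∉ EH → -1 < c e.1 - c e.2 := by
    intro e he hne
    have hmem : vecOf n e ∈ tQ n E := subset_convexHull _ _ (Or.inr ⟨e, he, rfl⟩)
    have hge : a ≤ ∑ i, c0 i * vecOf n e i := hfa _ hmem
    rw [dot_vecOf] at hge
    have hnotin : vecOf n e ∉ Qp n EH := vecOf_not_mem_Qp (ne_of_lt (hE e he)) hne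
    have hneq : c0 e.1 - c0 e.2 ≠ a := by
      intro heq
      apply hnotin
      rw [hfc]
      exact ⟨hmem, by rw [dot_vecOf]; exact heq⟩
    have hgt : a < c0 e.1 - c0 e.2 := lt_of_le_of_ne hge (Ne.symm hneq)
    simp only [hc]
    rw [div_sub_div_same, lt_div_iff₀ hna]
    linarith
  constructor
  · -- path consistency
    intro i j k₁ k₂ h1 h2
    have e1 := walkVal_eval hc_eq h1
    have e2 := walkVal_eval hc_eq h2
    have : (k₁ : ℝ) = k₂ := by linarith
    exact_mod_cast this
  · -- weights
    set rep : Fin n → Fin n := fun v =>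
      (Finset.univ.filter (fun u => SameComp EH v u)).min'
        ⟨v, Finset.mem_filter.mpr ⟨Finset.mem_univ v, Relation.ReflTransGen.refl⟩⟩ with hrep
    have hrep_same : ∀ v, SameComp EH v (rep v) := by
      intro v
      have := Finset.min'_mem (Finset.univ.filter (fun u => SameComp EH v u))
        ⟨v, Finset.mem_filter.mpr ⟨Finset.mem_univ v, Relation.ReflTransGen.refl⟩⟩
      exact (Finset.mem_filter.mp this).2
    have hrep_eq : ∀ u v, SameComp EH u v → rep u = rep v := by
      intro u v huv
      have hfilter : (Finset.univ.filter (fun x => SameComp EH u x)) =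
          (Finset.univ.filter (fun x => SameComp EH v x)) := by
        apply Finset.filter_congr
        intro x _
        constructor
        · intro h; exact (sameComp_symm huv).trans h
        · intro h; exact huv.trans h
      apply le_antisymm
      · apply Finset.min'_le
        rw [hfilter]
        exact Finset.min'_mem _ _
      · apply Finset.min'_le
        rw [← hfilter]
        exact Finset.min'_mem _ _
    have hwex : ∀ v, ∃ k, WalkVal EH (rep v) v k :=
      fun v => sameComp_walkVal (sameComp_symm (hrep_same v))
    set w : Fin n → ℤ := fun v => Classical.choose (hwex v) with hwdef
    have hwval : ∀ v, WalkVal EH (rep v) v (w v) := fun v => Classical.choose_spec (hwex v)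
    have hwc : ∀ v, c v = c (rep v) + w v := fun v => walkVal_eval hc_eq (hwval v)
    refine ⟨w, ?_, ?_⟩
    · intro e he
      have hsame : SameComp EH e.1 e.2 :=
        Relation.ReflTransGen.single (Or.inl (by simpa using he))
      have hre : rep e.1 = rep e.2 := hrep_eq _ _ hsame
      have h1 := hwc e.1
      have h2 := hwc e.2
      have h3 := hc_eq e he
      rw [hre] at h1
      have : (w e.2 : ℝ) = w e.1 + 1 := by linarith
      exact_mod_cast this
    · intro k cs hmemcs hcyc
      have hterm : ∀ i : Fin (k + 1), -1 < c (cs i).1 - c (cs i).2 :=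
        fun i => hc_lt _ (hmemcs i).1 (hmemcs i).2
      have hrepsum : ∑ i, c (rep (cs i).2) = ∑ i, c (rep (cs i).1) := by
        have h1 : ∀ i : Fin (k + 1), c (rep (cs i).2) = c (rep (cs (i + 1)).1) :=
          fun i => by rw [hrep_eq _ _ (hcyc i)]
        calc ∑ i, c (rep (cs i).2) = ∑ i, c (rep (cs (i + 1)).1) :=
              Finset.sum_congr rfl (fun i _ => h1 i)
          _ = ∑ i, c (rep (cs i).1) :=
              Fintype.sum_equiv (Equiv.addRight 1) _ _ (fun i => rfl)
      have hkey : ∑ i, (c (cs i).1 - c (cs i).2) =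
          ∑ i, ((w (cs i).1 : ℝ) - w (cs i).2) := by
        rw [Finset.sum_sub_distrib, Finset.sum_sub_distrib]
        have e1 : ∑ i, c (cs i).1 = ∑ i, (c (rep (cs i).1) + (w (cs i).1 : ℝ)) :=
          Finset.sum_congr rfl (fun i _ => hwc (cs i).1)
        have e2 : ∑ i, c (cs i).2 = ∑ i, (c (rep (cs i).2) + (w (cs i).2 : ℝ)) :=
          Finset.sum_congr rfl (fun i _ => hwc (cs i).2)
        rw [e1, e2, Finset.sum_add_distrib, Finset.sum_add_distrib, hrepsum]
        ring
      have hstrict : -((k : ℝ) + 1) < ∑ i, (c (cs i).1 - c (cs i).2) := by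
        have h1 : ∑ _i : Fin (k + 1), (-1 : ℝ) < ∑ i, (c (cs i).1 - c (cs i).2) :=
          Finset.sum_lt_sum_of_nonempty Finset.univ_nonempty (fun i _ => hterm i)
        have h2 : ∑ _i : Fin (k + 1), (-1 : ℝ) = -((k : ℝ) + 1) := by
          rw [Finset.sum_const, Finset.card_univ, Fintype.card_fin]
          push_cast
          ring
        linarith
      rw [hkey] at hstrict
      have hcast : ((∑ i, (w (cs i).1 - w (cs i).2) : ℤ) : ℝ) =
          ∑ i, ((w (cs i).1 : ℝ) - w (cs i).2) := by
        push_cast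
        rfl
      have : -((k : ℝ) + 1) < ((∑ i, (w (cs i).1 - w (cs i).2) : ℤ) : ℝ) := by
        rw [hcast]; exact hstrict
      exact_mod_cast this

end BF

/-- `Q_H` is a face of `tilde Q_G` iff `H` is path consistent and admissible. -/
theorem stmt11 (n : ℕ) (E EH : Set (Fin n × Fin n))
    (hE : ∀ e ∈ E, e.1 < e.2) (hH : EH ⊆ E) :
    IsFace n (tQ n E) (Qp n EH) ↔
      (PathConsistent EH ∧
        ∃ w : Fin n → ℤ, (∀ e ∈ EH, w e.2 = w e.1 + 1) ∧ Admissible E EH w) := by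
  constructor
  · exact admissible_of_face hE hH
  · rintro ⟨_, w, hw, hadm⟩
    exact face_of_admissible hE hH hw hadm
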